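/- Let G = (V,E) be a graph and P_G the program from the W[1]-hardness reduction with parameter k. If P_G has a sequentially consistent interleaving (with any number of preemptions), then G has an independent set of size k. -/

import Mathlib

/-- Memory events: reads and writes of natural-number values to variables of type `V`. -/
inductive Event (V : Type) where
  | read  (x : V) (d : ℕ)
  | write (x : V) (d : ℕ)
deriving DecidableEq

variable {V ι : Type}

/-- A sequence of events is sequentially consistent (SC): every read `r(x,d)` has a
preceding write `w(x,d)` with no write of a different value to `x` in between. -/
def SC (σ : List (Event V)) : Prop :=
  ∀ p x d, σ[(p : ℕ)]? = some (Event.read x d) →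
    ∃ q, q < p ∧ σ[q]? = some (Event.write x d) ∧
      ∀ r, q < r → r < p → ∀ d', d' ≠ d → σ[r]? ≠ some (Event.write x d')

/-- `σ` is an interleaving of the given threads: its restriction to each
thread identifier equals that thread's event sequence. -/
def IsInterleaving [DecidableEq ι] (threads : ι → List (Event V)) (σ : List (ι × Event V)) : Prop :=
  ∀ i, σ.filterMap (fun a => if a.1 = i then some a.2 else none) = threads i

/-- A preemption occurs at position `j`: the events at `j` and `j+1` are from
different threads and the event at `j` is not the last event of its thread. -/
def PreemptionAt (σ : List (ι × Event V)) (j : ℕ) : Prop :=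
  ∃ a b, σ[j]? = some a ∧ σ[j + 1]? = some b ∧ a.1 ≠ b.1 ∧
    ∃ r c, j < r ∧ σ[r]? = some c ∧ c.1 = a.1

open Classical in
/-- The number of preemption positions of `σ`. -/
noncomputable def numPreemptions (σ : List (ι × Event V)) : ℕ :=
  ((Finset.range σ.length).filter fun j => PreemptionAt σ j).card

open Classical in
/-- The number of context switches of `σ` (adjacent events of different threads). -/
noncomputable def numSwitches (σ : List (ι × Event V)) : ℕ :=
  ((Finset.range σ.length).filter fun j =>
    ∃ a b, σ[j]? = some a ∧ σ[j + 1]? = some b ∧ a.1 ≠ b.1).card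

/-- The (increasing) list of positions of `σ` carrying events of thread `i`. -/
def threadPositions [DecidableEq ι] (σ : List (ι × Event V)) (i : ι) : List ℕ :=
  (List.range σ.length).filter fun p => decide ((σ[p]?).map Prod.fst = some i)

/-- The position in `σ` of the `j`-th event of thread `i`. -/
def posOf [DecidableEq ι] (σ : List (ι × Event V)) (i : ι) (j : ℕ) : ℕ :=
  (threadPositions σ i).getD j 0

/-- All events of thread `t` occur before all events of thread `t'` in `σ`. -/
def ThreadBefore [DecidableEq ι] (σ : List (ι × Event V)) (t t' : ι) : Prop :=
  ∀ p ∈ threadPositions σ t, ∀ q ∈ threadPositions σ t', p < q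

/-- The event is a write to variable `x`. -/
def writesTo (x : V) : Event V → Prop
  | Event.write y _ => y = x
  | _ => False

/-- A 1-writer program: for each variable, a single thread performs all writes to it. -/
def OneWriter (threads : ι → List (Event V)) : Prop :=
  ∀ x i i', (∃ e ∈ threads i, writesTo x e) → (∃ e ∈ threads i', writesTo x e) → i = i'

/-- The events of thread `i` from its index `s` onwards appear contiguously in `σ`. -/
def ContiguousFrom [DecidableEq ι] (σ : List (ι × Event V)) (i : ι) (s : ℕ) : Prop :=
  ∀ j, s ≤ j → j + 1 < (threadPositions σ i).length → posOf σ i (j + 1) = posOf σ i j + 1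

/-- Conflict-graph edge `tr → tw` between outer blocks (suffixes of the threads
starting at indices `s tr`, `s tw`): the last write to some variable `x` in the
outer block of `tw` conflicts with a read of `x` in the outer block of `tr`. -/
def ConflictEdge [DecidableEq ι] (threads : ι → List (Event V)) (s : ι → ℕ) (tr tw : ι) : Prop :=
  tr ≠ tw ∧ ∃ x d d' jr jw, d ≠ d' ∧
    s tr ≤ jr ∧ (threads tr)[jr]? = some (Event.read x d) ∧
    s tw ≤ jw ∧ (threads tw)[jw]? = some (Event.write x d') ∧
    ∀ j d'', jw < j → (threads tw)[j]? ≠ some (Event.write x d'')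

/-- Splitting a list into contiguous blocks immediately after each position in `cut`. -/
def splitAtCuts {α : Type} (l : List α) (cut : Finset ℕ) : List (List α) :=
  let cs := cut.sort (· ≤ ·)
  ((0 :: cs.map (· + 1)).zip (cs.map (· + 1) ++ [l.length])).map fun p => (l.take p.2).drop p.1


/-- Variables of the W[1]-hardness reduction program `P_G`. -/
inductive GVar (α : Type) (k : ℕ) where
  | y (e : Sym2 α)
  | x (j : Fin k)
  | s
  | p (j : ℕ)
deriving DecidableEq

/-- Thread identifiers of `P_G`. -/
inductive GTId (k : ℕ) where
  | init
  | checker (j : Fin k)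
  | sel (j : Fin k)
deriving DecidableEq

variable {α : Type} [Fintype α] [DecidableEq α]

/-- The list of edges of `G` incident on `v`. -/
noncomputable def incEdges (G : SimpleGraph α) [DecidableRel G.Adj] (v : α) : List (Sym2 α) :=
  (G.edgeFinset.filter fun e => v ∈ e).toList

/-- The `Init` thread of `P_G`. -/
noncomputable def initThread (G : SimpleGraph α) [DecidableRel G.Adj] (k : ℕ) :
    List (Event (GVar α k)) :=
  (G.edgeFinset.toList.map fun e => Event.write (GVar.y e) 0) ++
  ((List.finRange k).map fun j => Event.write (GVar.x j) 1) ++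
  [Event.write GVar.s 1, Event.write (GVar.p 0) 1]

/-- The thread `Checker_j` of `P_G`. -/
def checkerThread {k : ℕ} (j : Fin k) : List (Event (GVar α k)) :=
  [Event.read (GVar.p j.val) 1] ++
  (if j.val + 1 ≠ k then [Event.write GVar.s 0] else []) ++
  [Event.read (GVar.x j) 0] ++
  (if j.val + 1 = k then [Event.write GVar.s 1] else []) ++
  [Event.write (GVar.p (j.val + 1)) 1]

/-- The block `B_v^j` of selector thread `Sel_j` for vertex `v`. -/
noncomputable def selBlock (G : SimpleGraph α) [DecidableRel G.Adj] {k : ℕ} (j : Fin k) (v : α) :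
    List (Event (GVar α k)) :=
  ((incEdges G v).flatMap fun e => [Event.read (GVar.y e) 0, Event.write (GVar.y e) (j.val + 1)]) ++
  [Event.read GVar.s 1, Event.write (GVar.x j) 0, Event.write (GVar.x j) 1] ++
  ((incEdges G v).flatMap fun e => [Event.read (GVar.y e) (j.val + 1), Event.write (GVar.y e) 0])

/-- The selector thread `Sel_j` of `P_G`: one block per vertex of `G`. -/
noncomputable def selThread (G : SimpleGraph α) [DecidableRel G.Adj] {k : ℕ} (j : Fin k) :
    List (Event (GVar α k)) :=
  (Finset.univ : Finset α).toList.flatMap (selBlock G j)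

/-- The program `P_G` of the W[1]-hardness reduction with parameter `k`. -/
noncomputable def pgThreads (G : SimpleGraph α) [DecidableRel G.Adj] (k : ℕ) :
    GTId k → List (Event (GVar α k))
  | GTId.init => initThread G k
  | GTId.checker j => checkerThread j
  | GTId.sel j => selThread G j

namespace SAux

variable {γ β : Type*}

theorem get?_append_cases {A B : List γ} {i : ℕ} {b : γ} (h : (A ++ B)[i]? = some b) :
    (i < A.length ∧ A[i]? = some b) ∨ (A.length ≤ i ∧ B[(i - A.length)]? = some b) := by
  rcases lt_or_ge i A.length with h' | h'
  · exact Or.inl ⟨h', by rwa [List.getElem?_append_left h'] at h⟩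
  · exact Or.inr ⟨h', by rwa [List.getElem?_append_right h'] at h⟩

theorem getAppL {A : List γ} (B : List γ) {i : ℕ} {b : γ} (h : A[i]? = some b) :
    (A ++ B)[i]? = some b := by
  obtain ⟨hl, -⟩ := List.getElem?_eq_some_iff.mp h
  rwa [List.getElem?_append_left hl]

theorem getAppR (A : List γ) {B : List γ} {i : ℕ} {b : γ} (h : B[i]? = some b) :
    (A ++ B)[(A.length + i)]? = some b := by
  rw [List.getElem?_append_right (Nat.le_add_right _ _)]
  simpa using h

def cnt (f : γ → Option β) (l : List γ) (p : ℕ) : ℕ := ((l.take p).filterMap f).length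

theorem cnt_mono (f : γ → Option β) (l : List γ) {p q : ℕ} (h : p ≤ q) :
    cnt f l p ≤ cnt f l q := by
  unfold cnt
  obtain ⟨r, rfl⟩ := Nat.exists_eq_add_of_le h
  rw [List.take_add, List.filterMap_append, List.length_append]
  omega

theorem cnt_succ_kept {f : γ → Option β} {l : List γ} {p : ℕ} {a b} (h : l[p]? = some a)
    (hb : f a = some b) : cnt f l (p + 1) = cnt f l p + 1 := by
  unfold cnt
  rw [List.take_succ]
  have : l[p]? = some a := by exact h
  rw [this]
  simp [List.filterMap_append, hb]

theorem cnt_lt_of_kept {f : γ → Option β} {l : List γ} {p q : ℕ} {a b} (hpq : p < q)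
    (h : l[p]? = some a) (hb : f a = some b) : cnt f l p < cnt f l q := by
  have h1 := cnt_succ_kept h hb
  have h2 := cnt_mono f l (show p + 1 ≤ q from hpq)
  omega

theorem filterMap_get?_cnt {f : γ → Option β} {l : List γ} {p : ℕ} {a b} (h : l[p]? = some a)
    (hb : f a = some b) : (l.filterMap f)[(cnt f l p)]? = some b := by
  obtain ⟨hlt, hget⟩ := List.getElem?_eq_some_iff.mp h
  have hsplit : l.filterMap f = (l.take p).filterMap f ++ (l.drop p).filterMap f := by
    rw [← List.filterMap_append, List.take_append_drop]
  have hdrop : l.drop p = a :: l.drop (p + 1) := by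
    rw [List.drop_eq_getElem_cons hlt, hget]
  rw [hsplit, hdrop, List.filterMap_cons, hb]
  have : cnt f l p = ((l.take p).filterMap f).length + 0 := rfl
  rw [this]
  exact getAppR _ rfl

theorem cnt_cons_succ {f : γ → Option β} {x : γ} {xs : List γ} {p : ℕ} :
    cnt f (x :: xs) (p + 1) = ((f x).toList).length + cnt f xs p := by
  unfold cnt
  rw [List.take_succ_cons, List.filterMap_cons]
  cases f x <;> simp <;> omega

theorem exists_of_filterMap_get? {f : γ → Option β} :
    ∀ {l : List γ} {j : ℕ} {b}, (l.filterMap f)[j]? = some b →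
      ∃ p a, l[p]? = some a ∧ f a = some b ∧ cnt f l p = j := by
  intro l
  induction l with
  | nil => intro j b h; simp at h
  | cons x xs ih =>
    intro j b h
    rw [List.filterMap_cons] at h
    cases hfx : f x with
    | none =>
      rw [hfx] at h
      obtain ⟨p, a, h1, h2, h3⟩ := ih h
      refine ⟨p + 1, a, by simpa using h1, h2, ?_⟩
      rw [cnt_cons_succ, hfx]; simpa using h3
    | some c =>
      rw [hfx] at h
      cases j with
      | zero =>
        refine ⟨0, x, rfl, ?_, rfl⟩
        rw [hfx]; simpa using h
      | succ j =>
        obtain ⟨p, a, h1, h2, h3⟩ := ih h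
        refine ⟨p + 1, a, by simpa using h1, h2, ?_⟩
        rw [cnt_cons_succ, hfx]; simp; omega

section Interleaving

variable {V ι : Type} [DecidableEq ι] {threads : ι → List (Event V)} {σ : List (ι × Event V)}

def fthr (t : ι) : ι × Event V → Option (Event V) := fun a => if a.1 = t then some a.2 else none

theorem fthr_pair (t : ι) (e : Event V) : fthr t (t, e) = some e := by simp [fthr]

theorem fthr_eq_some {t : ι} {a : ι × Event V} {e : Event V} (h : fthr t a = some e) :
    a = (t, e) := by
  unfold fthr at h
  split at h
  · cases h; exact Prod.ext ‹_› rfl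
  · cases h

theorem pos_exists (hI : IsInterleaving threads σ) {t : ι} {j : ℕ} {e : Event V}
    (h : (threads t)[j]? = some e) :
    ∃ p, σ[p]? = some (t, e) ∧ cnt (fthr t) σ p = j := by
  have hft : σ.filterMap (fthr t) = threads t := hI t
  rw [← hft] at h
  obtain ⟨p, a, h1, h2, h3⟩ := exists_of_filterMap_get? h
  exact ⟨p, by rwa [fthr_eq_some h2] at h1, h3⟩

theorem pos_idx (hI : IsInterleaving threads σ) {t : ι} {p : ℕ} {e : Event V}
    (h : σ[p]? = some (t, e)) : (threads t)[(cnt (fthr t) σ p)]? = some e := by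
  have := filterMap_get?_cnt h (fthr_pair t e)
  rwa [show σ.filterMap (fthr t) = threads t from hI t] at this

theorem pos_mem (hI : IsInterleaving threads σ) {t : ι} {p : ℕ} {e : Event V}
    (h : σ[p]? = some (t, e)) : e ∈ threads t :=
  List.mem_of_getElem? (pos_idx hI h)

theorem pos_lt {t : ι} {p p' : ℕ} {e e' : Event V} (h1 : σ[p]? = some (t, e))
    (h2 : σ[p']? = some (t, e')) (hc : cnt (fthr t) σ p < cnt (fthr t) σ p') : p < p' := by
  by_contra hcon
  push_neg at hcon
  rcases Nat.lt_or_ge p' p with h | h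
  · exact absurd (cnt_lt_of_kept h h2 (fthr_pair t e')) (by omega)
  · have : p = p' := by omega
    subst this; omega

theorem pos_lt' {t : ι} {p p' : ℕ} {e : Event V} (h1 : σ[p]? = some (t, e))
    (hpp : p < p') : cnt (fthr t) σ p < cnt (fthr t) σ p' :=
  cnt_lt_of_kept hpp h1 (fthr_pair t e)

theorem pos_inj {t : ι} {p p' : ℕ} {e e' : Event V} (h1 : σ[p]? = some (t, e))
    (h2 : σ[p']? = some (t, e')) (hc : cnt (fthr t) σ p = cnt (fthr t) σ p') : p = p' := by
  rcases Nat.lt_trichotomy p p' with h | h | h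
  · exact absurd (pos_lt' h1 h) (by omega)
  · exact h
  · exact absurd (pos_lt' h2 h) (by omega)

theorem map_get?_of {p : ℕ} {t : ι} {e : Event V} (h : σ[p]? = some (t, e)) :
    (σ.map Prod.snd)[p]? = some e := by
  rw [List.getElem?_map, h]; rfl

theorem of_map_get? {p : ℕ} {e : Event V} (h : (σ.map Prod.snd)[p]? = some e) :
    ∃ t, σ[p]? = some (t, e) := by
  rw [List.getElem?_map] at h
  cases hσ : σ[p]? with
  | none => rw [hσ] at h; cases h
  | some a =>
    rw [hσ] at h
    cases a with
    | mk t ev =>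
      simp at h
      exact ⟨t, by subst h; rfl⟩

end Interleaving

theorem bind_get?_of {L : List γ} {g : γ → List β} {A : List γ} {v : γ} {B : List γ}
    (hL : L = A ++ v :: B) {i : ℕ} {b : β} (h : (g v)[i]? = some b) :
    (L.flatMap g)[((A.flatMap g).length + i)]? = some b := by
  subst hL
  rw [List.flatMap_append, List.flatMap_cons]
  exact getAppR _ (getAppL _ h)

theorem bind_get?_inv {g : γ → List β} : ∀ {L : List γ} {m : ℕ} {b : β},
    (L.flatMap g)[m]? = some b →
    ∃ A v B i, L = A ++ v :: B ∧ (g v)[i]? = some b ∧ m = (A.flatMap g).length + i := by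
  intro L
  induction L with
  | nil => intro m b h; simp at h
  | cons x xs ih =>
    intro m b h
    rw [List.flatMap_cons] at h
    rcases get?_append_cases h with ⟨h1, h2⟩ | ⟨h1, h2⟩
    · exact ⟨[], x, xs, m, rfl, h2, by simp⟩
    · obtain ⟨A, v, B, i, rfl, hg, hm⟩ := ih h2
      refine ⟨x :: A, v, B, i, rfl, hg, ?_⟩
      rw [List.flatMap_cons, List.length_append]
      omega

theorem decomp_tri {l A1 A2 B1 B2 : List γ} {v1 v2 : γ} (h1 : l = A1 ++ v1 :: B1)
    (h2 : l = A2 ++ v2 :: B2) :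
    (A1 = A2 ∧ v1 = v2 ∧ B1 = B2) ∨ (∃ C, A2 = A1 ++ v1 :: C) ∨ (∃ C, A1 = A2 ++ v2 :: C) := by
  rcases Nat.lt_trichotomy A1.length A2.length with h | h | h
  · right; left
    have : A2 = (A1 ++ v1 :: B1).take A2.length := by
      rw [← h1, h2, List.take_left]
    rw [List.take_append, List.take_of_length_le (by omega)] at this
    obtain ⟨m, hm⟩ : ∃ m, A2.length - A1.length = m + 1 := ⟨A2.length - A1.length - 1, by omega⟩
    rw [hm, List.take_succ_cons] at this
    exact ⟨B1.take m, this⟩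
  · left
    have hA : A1 = A2 := by
      have e1 : A1 = l.take A1.length := by rw [h1, List.take_left]
      have e2 : A2 = l.take A2.length := by rw [h2, List.take_left]
      rw [e1, e2, h]
    subst hA
    rw [h1] at h2
    have := List.append_cancel_left h2
    cases this
    exact ⟨rfl, rfl, rfl⟩
  · right; right
    have : A1 = (A2 ++ v2 :: B2).take A1.length := by
      rw [← h2, h1, List.take_left]
    rw [List.take_append, List.take_of_length_le (by omega)] at this
    obtain ⟨m, hm⟩ : ∃ m, A1.length - A2.length = m + 1 := ⟨A1.length - A2.length - 1, by omega⟩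
    rw [hm, List.take_succ_cons] at this
    exact ⟨B2.take m, this⟩

theorem nodup_decomp {l A1 A2 B1 B2 : List γ} {x : γ} (hnd : l.Nodup) (h1 : l = A1 ++ x :: B1)
    (h2 : l = A2 ++ x :: B2) : A1 = A2 ∧ B1 = B2 := by
  rcases decomp_tri h1 h2 with ⟨hA, -, hB⟩ | ⟨C, hC⟩ | ⟨C, hC⟩
  · exact ⟨hA, hB⟩
  · exfalso
    rw [h2, List.nodup_append] at hnd
    exact hnd.2.2 x (show x ∈ A2 by rw [hC]; simp) x (show x ∈ x :: B2 by simp) rfl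
  · exfalso
    rw [h1, List.nodup_append] at hnd
    exact hnd.2.2 x (show x ∈ A1 by rw [hC]; simp) x (show x ∈ x :: B1 by simp) rfl

end SAux


namespace SAux2
open SAux

variable {α : Type} [Fintype α] [DecidableEq α] {k : ℕ}

def pF (j : Fin k) (e : Sym2 α) : List (Event (GVar α k)) :=
  [Event.read (GVar.y e) 0, Event.write (GVar.y e) (j.val + 1)]

def pS (j : Fin k) (e : Sym2 α) : List (Event (GVar α k)) :=
  [Event.read (GVar.y e) (j.val + 1), Event.write (GVar.y e) 0]

def midL (j : Fin k) : List (Event (GVar α k)) :=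
  [Event.read GVar.s 1, Event.write (GVar.x j) 0, Event.write (GVar.x j) 1]

variable (G : SimpleGraph α) [DecidableRel G.Adj]

noncomputable def fh (j : Fin k) (v : α) : List (Event (GVar α k)) :=
  (incEdges G v).flatMap (pF j)

noncomputable def sh (j : Fin k) (v : α) : List (Event (GVar α k)) :=
  (incEdges G v).flatMap (pS j)

theorem selBlock_eq (j : Fin k) (v : α) :
    selBlock G j v = (fh G j v ++ midL j) ++ sh G j v := rfl

theorem selThread_eq (j : Fin k) :
    selThread G j = (Finset.univ : Finset α).toList.flatMap (selBlock G j) := rfl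

variable {G}

theorem mem_fh {j : Fin k} {v : α} {b} (h : b ∈ fh G j v) :
    ∃ e, b = Event.read (GVar.y e) 0 ∨ b = Event.write (GVar.y e) (j.val + 1) := by
  simp only [fh, pF, List.mem_flatMap, List.mem_cons, List.mem_singleton] at h
  obtain ⟨e, -, he⟩ := h
  exact ⟨e, by tauto⟩

theorem mem_sh {j : Fin k} {v : α} {b} (h : b ∈ sh G j v) :
    ∃ e, b = Event.read (GVar.y e) (j.val + 1) ∨ b = Event.write (GVar.y e) 0 := by
  simp only [sh, pS, List.mem_flatMap, List.mem_cons, List.mem_singleton] at h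
  obtain ⟨e, -, he⟩ := h
  exact ⟨e, by tauto⟩

theorem blk_rs (j : Fin k) (v : α) :
    (selBlock G j v)[((fh G j v).length)]? = some (Event.read GVar.s 1) := by
  rw [selBlock_eq]
  exact getAppL _ (by simpa using getAppR (fh G j v) (show (midL j)[0]? = _ from rfl))

theorem blk_x0 (j : Fin k) (v : α) :
    (selBlock G j v)[((fh G j v).length + 1)]? = some (Event.write (GVar.x j) 0) := by
  rw [selBlock_eq]
  exact getAppL _ (getAppR (fh G j v) (show (midL j)[1]? = _ from rfl))

theorem blk_x1 (j : Fin k) (v : α) :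
    (selBlock G j v)[((fh G j v).length + 2)]? = some (Event.write (GVar.x j) 1) := by
  rw [selBlock_eq]
  exact getAppL _ (getAppR (fh G j v) (show (midL j)[2]? = _ from rfl))

theorem blk_fh {j : Fin k} {v : α} {E1 E2 : List (Sym2 α)} {e : Sym2 α}
    (hE : incEdges G v = E1 ++ e :: E2) :
    (selBlock G j v)[((E1.flatMap (pF j)).length)]? = some (Event.read (GVar.y e) 0) ∧
    (selBlock G j v)[((E1.flatMap (pF j)).length + 1)]?
      = some (Event.write (GVar.y e) (j.val + 1)) ∧
    (E1.flatMap (pF j)).length + 2 ≤ (fh G j v).length := by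
  have hlen : (fh G j v).length = (E1.flatMap (pF j)).length + 2 + (E2.flatMap (pF j)).length := by
    rw [fh, hE, List.flatMap_append, List.flatMap_cons]
    simp [pF]
    omega
  have h0 : (fh G j v)[((E1.flatMap (pF j)).length)]? = some (Event.read (GVar.y e) 0) := by
    have := bind_get?_of (g := pF j) hE (i := 0) (b := Event.read (GVar.y e) 0) rfl
    simpa [fh] using this
  have h1 : (fh G j v)[((E1.flatMap (pF j)).length + 1)]?
      = some (Event.write (GVar.y e) (j.val + 1)) := by
    have := bind_get?_of (g := pF j) hE (i := 1) (b := Event.write (GVar.y e) (j.val + 1)) rfl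
    simpa [fh] using this
  refine ⟨?_, ?_, by omega⟩
  · rw [selBlock_eq]; exact getAppL _ (getAppL _ h0)
  · rw [selBlock_eq]; exact getAppL _ (getAppL _ h1)

theorem blk_sh {j : Fin k} {v : α} {E1 E2 : List (Sym2 α)} {e : Sym2 α}
    (hE : incEdges G v = E1 ++ e :: E2) :
    (selBlock G j v)[((fh G j v).length + 3 + (E1.flatMap (pS j)).length)]?
      = some (Event.read (GVar.y e) (j.val + 1)) ∧
    (selBlock G j v)[((fh G j v).length + 3 + (E1.flatMap (pS j)).length + 1)]?
      = some (Event.write (GVar.y e) 0) ∧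
    (fh G j v).length + 3 + (E1.flatMap (pS j)).length + 2 ≤ (selBlock G j v).length := by
  have h0 : (sh G j v)[((E1.flatMap (pS j)).length)]?
      = some (Event.read (GVar.y e) (j.val + 1)) := by
    have := bind_get?_of (g := pS j) hE (i := 0) (b := Event.read (GVar.y e) (j.val + 1)) rfl
    simpa [sh] using this
  have h1 : (sh G j v)[((E1.flatMap (pS j)).length + 1)]?
      = some (Event.write (GVar.y e) 0) := by
    have := bind_get?_of (g := pS j) hE (i := 1) (b := Event.write (GVar.y e) 0) rfl
    simpa [sh] using this
  have hshlen : (E1.flatMap (pS j)).length + 2 ≤ (sh G j v).length := by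
    rw [sh, hE, List.flatMap_append, List.flatMap_cons]
    simp [pS]
  have hfm : (fh G j v ++ midL j).length = (fh G j v).length + 3 := by
    simp [midL]
  have key : ∀ i b, (sh G j v)[i]? = some b →
      (selBlock G j v)[((fh G j v).length + 3 + i)]? = some b := by
    intro i b hb
    rw [selBlock_eq]
    have := getAppR (fh G j v ++ midL j) hb
    rwa [hfm] at this
  refine ⟨key _ _ h0, ?_, ?_⟩
  · have := key _ _ h1
    rwa [← Nat.add_assoc] at this
  · rw [selBlock_eq]
    simp only [List.length_append, hfm]
    omega

theorem selBlock_inv_x {j j' : Fin k} {v : α} {i : ℕ}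
    (h : (selBlock G j v)[i]? = some (Event.write (GVar.x j') 0)) :
    i = (fh G j v).length + 1 := by
  rw [selBlock_eq] at h
  rcases get?_append_cases h with ⟨h1, h2⟩ | ⟨h1, h2⟩
  · rcases get?_append_cases h2 with ⟨h3, h4⟩ | ⟨h3, h4⟩
    · obtain ⟨e, he | he⟩ := mem_fh (List.mem_of_getElem? h4) <;> simp at he
    · have h5 := h4
      rcases hi : i - (fh G j v).length with _ | _ | _ | n <;> rw [hi] at h5 <;>
        simp [midL] at h5
      · omega
  · obtain ⟨e, he | he⟩ := mem_sh (List.mem_of_getElem? h2) <;> simp at he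

theorem selBlock_inv_y {j : Fin k} {v : α} {i : ℕ} {e : Sym2 α} {d : ℕ}
    (h : (selBlock G j v)[i]? = some (Event.write (GVar.y e) d)) (hd : d ≠ 0) :
    d = j.val + 1 ∧ ∃ E1 E2, incEdges G v = E1 ++ e :: E2 ∧
      i = (E1.flatMap (pF j)).length + 1 := by
  rw [selBlock_eq] at h
  rcases get?_append_cases h with ⟨h1, h2⟩ | ⟨h1, h2⟩
  · rcases get?_append_cases h2 with ⟨h3, h4⟩ | ⟨h3, h4⟩
    · rw [fh] at h4
      obtain ⟨E1, e', E2, ii, hE, hg, hm⟩ := bind_get?_inv h4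
      rcases hii : ii with _ | _ | n <;> rw [hii] at hg <;> simp [pF] at hg
      obtain ⟨he, hd2⟩ := hg
      subst he
      exact ⟨by omega, E1, E2, hE, by omega⟩
    · have h5 := h4
      rcases hi : i - (fh G j v).length with _ | _ | _ | n <;> rw [hi] at h5 <;>
        simp [midL] at h5
  · rw [sh] at h2
    obtain ⟨E1, e', E2, ii, hE, hg, hm⟩ := bind_get?_inv h2
    rcases hii : ii with _ | _ | n <;> rw [hii] at hg <;> simp [pS] at hg
    rcases hg with ⟨-, h0⟩
    omega

end SAux2


namespace SAux3
open SAux SAux2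

variable {α : Type} [Fintype α] [DecidableEq α] {k : ℕ}

def cxI (j : Fin k) : ℕ := if j.val + 1 = k then 1 else 2

theorem checker_get0 (j : Fin k) :
    (checkerThread (α := α) j)[0]? = some (Event.read (GVar.p j.val) 1) := by
  by_cases hk : j.val + 1 = k <;> simp [checkerThread, hk]

theorem checker_getx (j : Fin k) :
    (checkerThread (α := α) j)[(cxI j)]? = some (Event.read (GVar.x j) 0) := by
  by_cases hk : j.val + 1 = k <;> simp [checkerThread, cxI, hk]

theorem cxI_bounds (j : Fin k) : 1 ≤ cxI j ∧ cxI j ≤ 2 := by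
  unfold cxI; split <;> omega

theorem checker_gets0 (j : Fin k) (h : j.val + 1 ≠ k) :
    (checkerThread (α := α) j)[1]? = some (Event.write GVar.s 0) := by
  simp [checkerThread, h]

theorem checker_inv_p {j : Fin k} {i m d : ℕ}
    (h : (checkerThread (α := α) j)[i]? = some (Event.write (GVar.p m) d)) : i = 3 := by
  by_cases hk : j.val + 1 = k <;>
    rcases i with _ | _ | _ | _ | i <;> simp [checkerThread, hk] at h <;> rfl

theorem checker_inv_s {j : Fin k} {i d : ℕ}
    (h : (checkerThread (α := α) j)[i]? = some (Event.write GVar.s d)) :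
    (j.val + 1 ≠ k ∧ d = 0 ∧ i = 1) ∨ (j.val + 1 = k ∧ d = 1 ∧ i = 2) := by
  by_cases hk : j.val + 1 = k <;>
    rcases i with _ | _ | _ | _ | i <;> simp [checkerThread, hk] at h
  · exact Or.inr ⟨hk, h.symm, rfl⟩
  · exact Or.inl ⟨hk, h.symm, rfl⟩

theorem init_sp {G : SimpleGraph α} [DecidableRel G.Adj] {i i2 m ds dp : ℕ}
    (hs : (initThread G k)[i]? = some (Event.write GVar.s ds))
    (hp : (initThread G k)[i2]? = some (Event.write (GVar.p m) dp)) :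
    i2 = i + 1 := by
  have hinv : ∀ i' (z : GVar α k) (dd : ℕ), z = GVar.s ∨ (∃ mm, z = GVar.p mm) →
      (initThread G k)[i']? = some (Event.write z dd) →
      (z = GVar.s ∧ i' = ((G.edgeFinset.toList.map fun e => Event.write (GVar.y e) (0:ℕ)) ++
        (List.finRange k).map fun j => Event.write (GVar.x j) (1:ℕ)).length) ∨
      ((∃ mm, z = GVar.p mm) ∧ i' = ((G.edgeFinset.toList.map fun e => Event.write (GVar.y e) (0:ℕ)) ++
        (List.finRange k).map fun j => Event.write (GVar.x j) (1:ℕ)).length + 1) := by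
    intro i' z dd hz h
    rcases get?_append_cases (show (((G.edgeFinset.toList.map fun e => Event.write (GVar.y e) (0:ℕ)) ++
        (List.finRange k).map fun j => Event.write (GVar.x j) (1:ℕ)) ++
        [Event.write GVar.s 1, Event.write (GVar.p 0) 1])[i']? = some (Event.write z dd) from h)
      with ⟨h1, h2⟩ | ⟨h1, h2⟩
    · exfalso
      have hmem := List.mem_of_getElem? h2
      rcases hz with hz | ⟨mm, hz⟩ <;> subst hz <;> simp at hmem
    · rcases hi : i' - _ with _ | _ | n <;> rw [hi] at h2 <;> simp at h2
      · rcases hz with hz | ⟨mm, hz⟩ <;> subst hz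
        · exact Or.inl ⟨rfl, by omega⟩
        · simp at h2
      · rcases hz with hz | ⟨mm, hz⟩ <;> subst hz
        · simp at h2
        · exact Or.inr ⟨⟨mm, rfl⟩, by omega⟩
  rcases hinv i GVar.s ds (Or.inl rfl) hs with ⟨-, h1⟩ | ⟨⟨mm, hmm⟩, -⟩
  · rcases hinv i2 (GVar.p m) dp (Or.inr ⟨m, rfl⟩) hp with ⟨hc, -⟩ | ⟨-, h2⟩
    · cases hc
    · omega
  · cases hmm

theorem mem_selThread {j : Fin k} {G : SimpleGraph α} [DecidableRel G.Adj] {b}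
    (h : b ∈ selThread G j) :
    (∃ e, b = Event.read (GVar.y e) 0 ∨ b = Event.write (GVar.y e) (j.val + 1) ∨
      b = Event.read (GVar.y e) (j.val + 1) ∨ b = Event.write (GVar.y e) 0) ∨
    b = Event.read GVar.s 1 ∨ b = Event.write (GVar.x j) 0 ∨ b = Event.write (GVar.x j) 1 := by
  rw [selThread_eq] at h
  rw [List.mem_flatMap] at h
  obtain ⟨v, -, hv⟩ := h
  rw [selBlock_eq] at hv
  rcases List.mem_append.mp hv with hv | hv
  · rcases List.mem_append.mp hv with hv | hv
    · obtain ⟨e, he⟩ := mem_fh hv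
      exact Or.inl ⟨e, by tauto⟩
    · simp only [midL, List.mem_cons, List.not_mem_nil, or_false] at hv
      rcases hv with hv | hv | hv <;> tauto
  · obtain ⟨e, he⟩ := mem_sh hv
    exact Or.inl ⟨e, by tauto⟩

variable {G : SimpleGraph α} [DecidableRel G.Adj]

theorem mem_init {b} (h : b ∈ initThread G k) :
    (∃ e, b = Event.write (GVar.y e) 0) ∨ (∃ j : Fin k, b = Event.write (GVar.x j) 1) ∨
    b = Event.write GVar.s 1 ∨ b = Event.write (GVar.p 0) 1 := by
  simp only [initThread, List.mem_append, List.mem_map, List.mem_cons, List.mem_singleton] at h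
  rcases h with (⟨e, -, he⟩ | ⟨jj, -, hj⟩) | h | h | h
  · exact Or.inl ⟨e, he.symm⟩
  · exact Or.inr (Or.inl ⟨jj, hj.symm⟩)
  · exact Or.inr (Or.inr (Or.inl h))
  · exact Or.inr (Or.inr (Or.inr h))
  · cases h

theorem mem_checker {j : Fin k} {b} (h : b ∈ checkerThread (α := α) j) :
    b = Event.read (GVar.p j.val) 1 ∨ (j.val + 1 ≠ k ∧ b = Event.write GVar.s 0) ∨
    b = Event.read (GVar.x j) 0 ∨ (j.val + 1 = k ∧ b = Event.write GVar.s 1) ∨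
    b = Event.write (GVar.p (j.val + 1)) 1 := by
  by_cases hk : j.val + 1 = k
  · rw [checkerThread, if_neg (not_not_intro hk), if_pos hk] at h
    simp only [List.nil_append, List.singleton_append, List.cons_append, List.mem_cons,
      List.not_mem_nil, or_false] at h
    rcases h with h | h | h | h <;> tauto
  · rw [checkerThread, if_pos hk, if_neg hk] at h
    simp only [List.nil_append, List.singleton_append, List.cons_append, List.append_nil,
      List.mem_cons, List.not_mem_nil, or_false] at h
    rcases h with h | h | h | h <;> tauto

theorem w_x {t : GTId k} {j : Fin k} {d : ℕ}
    (h : Event.write (GVar.x j) d ∈ pgThreads G k t) :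
    (t = GTId.init ∧ d = 1) ∨ (t = GTId.sel j ∧ (d = 0 ∨ d = 1)) := by
  cases t with
  | init =>
    rcases mem_init (k := k) h with ⟨e, he⟩ | ⟨jj, hj⟩ | hs | hp <;> simp_all
  | checker j' =>
    rcases mem_checker (k := k) h with h | ⟨-, h⟩ | h | ⟨-, h⟩ | h <;> simp_all
  | sel j' =>
    rcases mem_selThread (k := k) h with ⟨e, he | he | he | he⟩ | hs | h0 | h1 <;> simp_all

theorem w_s {t : GTId k} {d : ℕ} (h : Event.write GVar.s d ∈ pgThreads G k t) :
    (t = GTId.init ∧ d = 1) ∨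
    (∃ j' : Fin k, t = GTId.checker j' ∧ ((j'.val + 1 ≠ k ∧ d = 0) ∨ (j'.val + 1 = k ∧ d = 1))) := by
  cases t with
  | init =>
    rcases mem_init (k := k) h with ⟨e, he⟩ | ⟨jj, hj⟩ | hs | hp <;> simp_all
  | checker j' =>
    rcases mem_checker (k := k) h with h | ⟨hk, h⟩ | h | ⟨hk, h⟩ | h <;> simp_all <;> tauto
  | sel j' =>
    rcases mem_selThread (k := k) h with ⟨e, he | he | he | he⟩ | hs | h0 | h1 <;> simp_all

theorem w_y {t : GTId k} {e : Sym2 α} {d : ℕ}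
    (h : Event.write (GVar.y e) d ∈ pgThreads G k t) :
    (t = GTId.init ∧ d = 0) ∨ (∃ j' : Fin k, t = GTId.sel j' ∧ (d = 0 ∨ d = j'.val + 1)) := by
  cases t with
  | init =>
    rcases mem_init (k := k) h with ⟨e', he⟩ | ⟨jj, hj⟩ | hs | hp <;> simp_all
  | checker j' =>
    rcases mem_checker (k := k) h with h | ⟨-, h⟩ | h | ⟨-, h⟩ | h <;> simp_all
  | sel j' =>
    rcases mem_selThread (k := k) h with ⟨e', he | he | he | he⟩ | hs | h0 | h1 <;> simp_all <;> tauto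

theorem w_p {t : GTId k} {m d : ℕ} (h : Event.write (GVar.p m) d ∈ pgThreads G k t) :
    (t = GTId.init ∧ m = 0) ∨ (∃ j' : Fin k, t = GTId.checker j' ∧ m = j'.val + 1) := by
  cases t with
  | init =>
    rcases mem_init (k := k) h with ⟨e', he⟩ | ⟨jj, hj⟩ | hs | hp <;> simp_all
  | checker j' =>
    rcases mem_checker (k := k) h with h | ⟨-, h⟩ | h | ⟨-, h⟩ | h <;> simp_all <;> tauto
  | sel j' =>
    rcases mem_selThread (k := k) h with ⟨e', he | he | he | he⟩ | hs | h0 | h1 <;> simp_all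

theorem mem_incEdges {v : α} {e : Sym2 α} :
    e ∈ incEdges G v ↔ e ∈ G.edgeFinset ∧ v ∈ e := by
  simp [incEdges, Finset.mem_filter]

end SAux3


/-- if `P_G` has an SC interleaving (with any number of preemptions),
then `G` (every vertex of which has a neighbour, as in the construction) has an
independent set of size `k`. -/
theorem stmt12 (G : SimpleGraph α) [DecidableRel G.Adj] (k : ℕ)
    (hdeg : ∀ v : α, ∃ u, G.Adj v u)
    (h : ∃ σ : List (GTId k × Event (GVar α k)),
        IsInterleaving (pgThreads G k) σ ∧ SC (σ.map Prod.snd)) :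
    ∃ I : Finset α, I.card = k ∧ ∀ a ∈ I, ∀ b ∈ I, ¬ G.Adj a b := by
  classical
  obtain ⟨σ, hI, hSC⟩ := h
  -- positions of the checker reads r(x_j, 0)
  have hcx : ∀ j : Fin k, ∃ p, σ[p]? = some (GTId.checker j, Event.read (GVar.x j) 0) ∧
      SAux.cnt (SAux.fthr (GTId.checker j)) σ p = SAux3.cxI j := fun j =>
    SAux.pos_exists hI
      (show (pgThreads G k (GTId.checker j))[(SAux3.cxI j)]?
          = some (Event.read (GVar.x j) 0) from SAux3.checker_getx j)
  choose c hc hccnt using hcx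
  -- the chain of checker reads is ordered
  have hstep : ∀ a b : Fin k, b.val = a.val + 1 → c a < c b := by
    intro a b hab
    obtain ⟨R, hR, hRcnt⟩ := SAux.pos_exists hI
      (show (pgThreads G k (GTId.checker b))[0]? = some (Event.read (GVar.p b.val) 1) from
        SAux3.checker_get0 b)
    obtain ⟨q, hqR, hqw, -⟩ := hSC R _ _ (SAux.map_get?_of hR)
    obtain ⟨t, hqt⟩ := SAux.of_map_get? hqw
    rcases SAux3.w_p (SAux.pos_mem hI hqt) with ⟨-, hm0⟩ | ⟨j', htj, hmj⟩
    · omega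
    · have hj' : j' = a := Fin.ext (by omega)
      rw [hj'] at htj
      subst htj
      have h3 := SAux3.checker_inv_p (SAux.pos_idx hI hqt)
      have hb1 := SAux3.cxI_bounds a
      have hb2 := SAux3.cxI_bounds b
      have h4 : c a < q := SAux.pos_lt (hc a) hqt (by rw [hccnt, h3]; omega)
      have h5 : R < c b := SAux.pos_lt hR (hc b) (by rw [hRcnt, hccnt]; omega)
      omega
  have hmono : ∀ a b : Fin k, a.val ≤ b.val → c a ≤ c b := by
    intro a b hab
    obtain ⟨n, hn⟩ : ∃ n, b.val = a.val + n := ⟨b.val - a.val, by omega⟩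
    clear hab
    induction n generalizing b with
    | zero => have : a = b := Fin.ext (by omega); subst this; exact le_refl _
    | succ n ih =>
      have hlt : a.val + n < k := by have := b.2; omega
      have h1 := ih ⟨a.val + n, hlt⟩ rfl
      have h2 := hstep ⟨a.val + n, hlt⟩ b (by simp; omega)
      omega
  -- per-checker block extraction
  have hblk : ∀ j : Fin k, ∃ (A : List α) (v : α) (B : List α) (W U X1 : ℕ),
      (Finset.univ : Finset α).toList = A ++ v :: B ∧
      σ[W]? = some (GTId.sel j, Event.write (GVar.x j) 0) ∧
      SAux.cnt (SAux.fthr (GTId.sel j)) σ W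
        = (A.flatMap (selBlock G j)).length + ((SAux2.fh G j v).length + 1) ∧
      σ[U]? = some (GTId.sel j, Event.read GVar.s 1) ∧
      SAux.cnt (SAux.fthr (GTId.sel j)) σ U
        = (A.flatMap (selBlock G j)).length + (SAux2.fh G j v).length ∧
      σ[X1]? = some (GTId.sel j, Event.write (GVar.x j) 1) ∧
      SAux.cnt (SAux.fthr (GTId.sel j)) σ X1
        = (A.flatMap (selBlock G j)).length + ((SAux2.fh G j v).length + 2) ∧
      U < W ∧ W < c j ∧ c j < X1 := by
    intro j
    obtain ⟨q, hqc, hqw, hno⟩ := hSC (c j) _ _ (SAux.map_get?_of (hc j))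
    obtain ⟨t, hqt⟩ := SAux.of_map_get? hqw
    rcases SAux3.w_x (SAux.pos_mem hI hqt) with ⟨-, h01⟩ | ⟨ht, -⟩
    · omega
    · subst ht
      have hidx : ((Finset.univ : Finset α).toList.flatMap (selBlock G j))[(SAux.cnt (SAux.fthr (GTId.sel j)) σ q)]? = some (Event.write (GVar.x j) 0) :=
        SAux.pos_idx hI hqt
      obtain ⟨A, v, B, ii, hAB, hbg, hmEq⟩ := SAux.bind_get?_inv hidx
      have hiEq := SAux2.selBlock_inv_x hbg
      -- r(s,1) position
      obtain ⟨U, hU, hUcnt⟩ := SAux.pos_exists hI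
        (show (pgThreads G k (GTId.sel j))[((A.flatMap (selBlock G j)).length + (SAux2.fh G j v).length)]?
          = some (Event.read GVar.s 1) from SAux.bind_get?_of hAB (SAux2.blk_rs j v))
      -- w(x_j,1) position
      obtain ⟨X1, hX1, hX1cnt⟩ := SAux.pos_exists hI
        (show (pgThreads G k (GTId.sel j))[((A.flatMap (selBlock G j)).length + ((SAux2.fh G j v).length + 2))]?
          = some (Event.write (GVar.x j) 1) from SAux.bind_get?_of hAB (SAux2.blk_x1 j v))
      have hUq : U < q := SAux.pos_lt hU hqt (by omega)
      have hqX1 : q < X1 := SAux.pos_lt hqt hX1 (by omega)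
      have hX1c : c j < X1 := by
        have hne : X1 ≠ c j := by
          intro hE
          rw [hE, hc j] at hX1
          simp at hX1
        have : ¬ (X1 < c j) := fun hlt =>
          hno X1 hqX1 hlt 1 (by omega) (SAux.map_get?_of hX1)
        omega
      exact ⟨A, v, B, q, U, X1, hAB, hqt, by omega, hU, hUcnt, hX1, hX1cnt, hUq, hqc, hX1c⟩
  choose A v B W U X1 hAB hW hWcnt hU hUcnt hX1 hX1cnt hUW hWc hcX1 using hblk
  -- the main impossibility
  have main : ∀ i j : Fin k, i ≠ j → ∀ e ∈ G.edgeFinset, v i ∈ e → v j ∈ e → False := by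
    intro i j hij e he hvi hvj
    have hvalij : i.val ≠ j.val := Fin.val_ne_of_ne hij
    have hk2 : 2 ≤ k := by have := i.2; have := j.2; omega
    have hf0 : 0 < k := by omega
    set f0 : Fin k := ⟨0, hf0⟩ with hf0def
    have hf0v : (f0 : ℕ) = 0 := rfl
    -- every selector's r(s,1) is before c f0
    have hUc0 : ∀ m : Fin k, U m < c f0 := by
      intro m
      obtain ⟨ws, hwsU, hwsw, hnoS⟩ := hSC (U m) GVar.s 1 (SAux.map_get?_of (hU m))
      obtain ⟨t, hwst⟩ := SAux.of_map_get? hwsw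
      rcases SAux3.w_s (SAux.pos_mem hI hwst) with ⟨ht, -⟩ | ⟨j', ht, hcase⟩
      · -- Init wrote s := 1
        subst ht
        have hf0val : (f0 : ℕ) = 0 := rfl
        obtain ⟨R0, hR0, hR0cnt⟩ := SAux.pos_exists hI
          (show (pgThreads G k (GTId.checker f0))[0]?
              = some (Event.read (GVar.p f0.val) 1) from SAux3.checker_get0 f0)
        obtain ⟨Z, hZ, hZcnt⟩ := SAux.pos_exists hI
          (show (pgThreads G k (GTId.checker f0))[1]?
              = some (Event.write GVar.s 0) from SAux3.checker_gets0 f0 (by omega))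
        obtain ⟨ws2, hws2R, hws2w, -⟩ := hSC R0 _ _ (SAux.map_get?_of hR0)
        obtain ⟨t2, hws2t⟩ := SAux.of_map_get? hws2w
        rcases SAux3.w_p (SAux.pos_mem hI hws2t) with ⟨ht2, -⟩ | ⟨j2, ht2, hj2⟩
        · subst ht2
          have hsp := SAux3.init_sp (SAux.pos_idx hI hwst) (SAux.pos_idx hI hws2t)
          have hws_lt : ws < ws2 := SAux.pos_lt hwst hws2t (by omega)
          have hZR0 : R0 < Z := SAux.pos_lt hR0 hZ (by omega)
          have hws2R0 : ws2 < R0 := hws2R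
          have hZU : ¬ (Z < U m) := fun hlt =>
            hnoS Z (by omega) hlt 0 (by omega) (SAux.map_get?_of hZ)
          have hZneU : Z ≠ U m := by
            intro hE
            rw [hE, hU m] at hZ
            simp at hZ
          have hZc : Z < c f0 := SAux.pos_lt hZ (hc f0) (by
            rw [hZcnt, hccnt]
            unfold SAux3.cxI
            rw [if_neg (by omega)]
            omega)
          omega
        · have hf0val : (f0 : ℕ) = 0 := rfl
          omega
      · -- checker j' wrote s; must be the last checker, but that is too late
        rcases hcase with ⟨-, h10⟩ | ⟨hjk, -⟩
        · omega
        · subst ht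
          rcases SAux3.checker_inv_s (SAux.pos_idx hI hwst) with ⟨hne, -, -⟩ | ⟨-, -, hi2⟩
          · exact absurd hjk hne
          · have h1 : c j' < ws := SAux.pos_lt (hc j') hwst (by
              rw [hccnt, hi2]
              unfold SAux3.cxI
              rw [if_pos hjk]
              omega)
            have h2 : c m ≤ c j' := hmono m j' (by have := m.2; omega)
            have h3 := hUW m
            have h4 := hWc m
            omega
    -- block-local positions for a vertex of e
    have hgetblk : ∀ a : Fin k, v a ∈ e → ∃ (E1 E2 : List (Sym2 α)) (Q P : ℕ),
        incEdges G (v a) = E1 ++ e :: E2 ∧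
        σ[Q]? = some (GTId.sel a, Event.write (GVar.y e) (a.val + 1)) ∧
        SAux.cnt (SAux.fthr (GTId.sel a)) σ Q
          = ((A a).flatMap (selBlock G a)).length + ((E1.flatMap (SAux2.pF a)).length + 1) ∧
        σ[P]? = some (GTId.sel a, Event.read (GVar.y e) (a.val + 1)) ∧
        SAux.cnt (SAux.fthr (GTId.sel a)) σ P
          = ((A a).flatMap (selBlock G a)).length +
            ((SAux2.fh G a (v a)).length + 3 + (E1.flatMap (SAux2.pS a)).length) ∧
        Q < U a ∧ X1 a < P := by
      intro a hva
      have hin : e ∈ incEdges G (v a) := SAux3.mem_incEdges.mpr ⟨he, hva⟩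
      obtain ⟨E1, E2, hE⟩ := List.append_of_mem hin
      obtain ⟨hf1, hf2, hf3⟩ := SAux2.blk_fh (G := G) (j := a) hE
      obtain ⟨hs1, hs2, hs3⟩ := SAux2.blk_sh (G := G) (j := a) hE
      obtain ⟨Q, hQ, hQcnt⟩ := SAux.pos_exists hI
        (show (pgThreads G k (GTId.sel a))[(((A a).flatMap (selBlock G a)).length + ((E1.flatMap (SAux2.pF a)).length + 1))]?
          = some (Event.write (GVar.y e) (a.val + 1)) from SAux.bind_get?_of (hAB a) hf2)
      obtain ⟨P, hP, hPcnt⟩ := SAux.pos_exists hI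
        (show (pgThreads G k (GTId.sel a))[(((A a).flatMap (selBlock G a)).length +
              ((SAux2.fh G a (v a)).length + 3 + (E1.flatMap (SAux2.pS a)).length))]?
          = some (Event.read (GVar.y e) (a.val + 1)) from SAux.bind_get?_of (hAB a) hs1)
      have hQU : Q < U a := SAux.pos_lt hQ (hU a) (by rw [hQcnt, hUcnt]; omega)
      have hXP : X1 a < P := SAux.pos_lt (hX1 a) hP (by rw [hX1cnt, hPcnt]; omega)
      exact ⟨E1, E2, Q, P, hE, hQ, hQcnt, hP, hPcnt, hQU, hXP⟩
    obtain ⟨E1i, E2i, Qi, Pi, hEi, hQi, hQicnt, hPi, hPicnt, hQUi, hXPi⟩ := hgetblk i hvi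
    obtain ⟨E1j, E2j, Qj, Pj, hEj, hQj, hQjcnt, hPj, hPjcnt, hQUj, hXPj⟩ := hgetblk j hvj
    -- cross ordering
    have hQjPi : Qj < Pi := by
      have h1 := hUc0 j
      have h2 : c f0 ≤ c i := hmono f0 i (by omega)
      have h3 := hcX1 i
      omega
    have hQiPj : Qi < Pj := by
      have h1 := hUc0 i
      have h2 : c f0 ≤ c j := hmono f0 j (by omega)
      have h3 := hcX1 j
      omega
    -- the satisfying write for each block's finish-read is the block's own write
    have sub : ∀ (a b : Fin k), a ≠ b →
        ∀ (Ea1 Ea2 : List (Sym2 α)) (Qa Pa Qb : ℕ),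
        incEdges G (v a) = Ea1 ++ e :: Ea2 →
        σ[Qa]? = some (GTId.sel a, Event.write (GVar.y e) (a.val + 1)) →
        SAux.cnt (SAux.fthr (GTId.sel a)) σ Qa
          = ((A a).flatMap (selBlock G a)).length + ((Ea1.flatMap (SAux2.pF a)).length + 1) →
        σ[Pa]? = some (GTId.sel a, Event.read (GVar.y e) (a.val + 1)) →
        SAux.cnt (SAux.fthr (GTId.sel a)) σ Pa
          = ((A a).flatMap (selBlock G a)).length +
            ((SAux2.fh G a (v a)).length + 3 + (Ea1.flatMap (SAux2.pS a)).length) →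
        σ[Qb]? = some (GTId.sel b, Event.write (GVar.y e) (b.val + 1)) →
        Qb < Pa → Qb < Qa := by
      intro a b hab Ea1 Ea2 Qa Pa Qb hEa hQa hQacnt hPa hPacnt hQb hQbPa
      obtain ⟨q', hq'P, hq'w, hno⟩ := hSC Pa (GVar.y e) (a.val + 1) (SAux.map_get?_of hPa)
      obtain ⟨t, hq't⟩ := SAux.of_map_get? hq'w
      rcases SAux3.w_y (SAux.pos_mem hI hq't) with ⟨-, h0⟩ | ⟨j', ht, hd⟩
      · omega
      · have hj'a : j' = a := by
          rcases hd with h | h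
          · omega
          · exact Fin.ext (by omega)
        rw [hj'a] at ht
        subst ht
        have hidx : ((Finset.univ : Finset α).toList.flatMap (selBlock G a))[(SAux.cnt (SAux.fthr (GTId.sel a)) σ q')]?
            = some (Event.write (GVar.y e) (a.val + 1)) := SAux.pos_idx hI hq't
        obtain ⟨A2, u, B2, ii, hAB2, hbg, hmEq⟩ := SAux.bind_get?_inv hidx
        obtain ⟨-, E1', E2', hE', hiEq⟩ := SAux2.selBlock_inv_y hbg (by omega)
        obtain ⟨hfa1, hfa2, hfa3⟩ := SAux2.blk_fh (G := G) (j := a) hE'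
        obtain ⟨hsa1, hsa2, hsa3⟩ := SAux2.blk_sh (G := G) (j := a) hE'
        rcases SAux.decomp_tri (hAB a) hAB2 with ⟨hA12, huv, -⟩ | ⟨C, hC⟩ | ⟨C, hC⟩
        · -- same block: q' is the block's own write
          subst hA12
          subst huv
          have hnd : (incEdges G (v a)).Nodup := Finset.nodup_toList _
          obtain ⟨hEE, -⟩ := SAux.nodup_decomp hnd hEa hE'
          subst hEE
          have hq'Qa : q' = Qa := SAux.pos_inj hq't hQa (by omega)
          have hQaQb : Qa ≠ Qb := by
            intro hEq
            rw [hEq, hQb] at hQa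
            simp at hQa
            exact hab (Fin.ext (by omega))
          by_contra hcon
          push_neg at hcon
          have hlt : q' < Qb := by omega
          exact hno Qb hlt hQbPa (b.val + 1) (by omega) (SAux.map_get?_of hQb)
        · -- the write's block is after the read's block: impossible
          exfalso
          have hlen : (A2.flatMap (selBlock G a)).length
              = ((A a).flatMap (selBlock G a)).length + (selBlock G a (v a)).length
                + (C.flatMap (selBlock G a)).length := by
            rw [hC, List.flatMap_append, List.flatMap_cons, List.length_append,
              List.length_append]
            omega
          obtain ⟨-, -, hsb3⟩ := SAux2.blk_sh (G := G) (j := a) hEa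
          have : Pa < q' := SAux.pos_lt hPa hq't (by omega)
          omega
        · -- the write's block is before the read's block: its reset write intervenes
          exfalso
          have hlen : ((A a).flatMap (selBlock G a)).length
              = (A2.flatMap (selBlock G a)).length + (selBlock G a u).length
                + (C.flatMap (selBlock G a)).length := by
            rw [hC, List.flatMap_append, List.flatMap_cons, List.length_append,
              List.length_append]
            omega
          obtain ⟨z, hz, hzcnt⟩ := SAux.pos_exists hI
            (show (pgThreads G k (GTId.sel a))[((A2.flatMap (selBlock G a)).length +
                  ((SAux2.fh G a u).length + 3 + (E1'.flatMap (SAux2.pS a)).length + 1))]?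
              = some (Event.write (GVar.y e) 0) from SAux.bind_get?_of hAB2 hsa2)
          have hq'z : q' < z := SAux.pos_lt hq't hz (by omega)
          have hzPa : z < Pa := SAux.pos_lt hz hPa (by omega)
          exact hno z hq'z hzPa 0 (by omega) (SAux.map_get?_of hz)
    have h1 : Qj < Qi := sub i j hij E1i E2i Qi Pi Qj hEi hQi hQicnt hPi hPicnt hQj hQjPi
    have h2 : Qi < Qj := sub j i hij.symm E1j E2j Qj Pj Qi hEj hQj hQjcnt hPj hPjcnt hQi hQiPj
    omega
  -- build the independent set
  have hinj : Function.Injective v := by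
    intro a b hvab
    by_contra hab
    obtain ⟨u, hadj⟩ := hdeg (v a)
    have he : s(v a, u) ∈ G.edgeFinset := SimpleGraph.mem_edgeFinset.mpr
      (SimpleGraph.mem_edgeSet G |>.mpr hadj)
    exact main a b hab s(v a, u) he (Sym2.mem_mk_left _ _) (by rw [hvab]; exact Sym2.mem_mk_left _ _)
  refine ⟨Finset.image v Finset.univ, ?_, ?_⟩
  · rw [Finset.card_image_of_injective _ hinj]
    simp
  · intro a ha b hb hadj
    simp only [Finset.mem_image, Finset.mem_univ, true_and] at ha hb
    obtain ⟨x, rfl⟩ := ha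
    obtain ⟨y, rfl⟩ := hb
    by_cases hxy : x = y
    · subst hxy
      exact G.irrefl hadj
    · have he : s(v x, v y) ∈ G.edgeFinset := SimpleGraph.mem_edgeFinset.mpr
        (SimpleGraph.mem_edgeSet G |>.mpr hadj)
      exact main x y hxy s(v x, v y) he (Sym2.mem_mk_left _ _) (Sym2.mem_mk_right _ _)
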